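/- Let r ≥ 2 and let ℓ ≥ 0 be a real number. If G is an r-partite graph with parts U_1, …, U_r (each part an independent set) such that for every pair 1 ≤ i < j ≤ r the number of edges of G between U_i and U_j is at most ℓ, then the number of copies of K_r in G (equivalently, the number of r-cliques of G) is at most ℓ^{r/2}. -/

import Mathlib

open MeasureTheory Real
open scoped Classical

section AlonAux

variable {V : Type*} [Fintype V] [DecidableEq V]

/-- Number of "colored cliques": tuples picking a vertex in each part, pairwise adjacent. -/
private def cnt (G : SimpleGraph V) [DecidableRel G.Adj] {r : ℕ} (A : Fin r → Finset V) : ℕ :=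
  ((Fintype.piFinset A).filter fun f => ∀ i j : Fin r, i < j → G.Adj (f i) (f j)).card

private lemma card_filter_prod (s t : Finset V) (P : V → V → Prop)
    [DecidablePred fun q : V × V => P q.1 q.2] [∀ a, DecidablePred fun b => P a b] :
    ((s ×ˢ t).filter fun q => P q.1 q.2).card = ∑ a ∈ s, (t.filter fun b => P a b).card := by
  rw [Finset.card_eq_sum_card_fiberwise (f := Prod.fst) (t := s)
    (fun p hp => (Finset.mem_product.mp (Finset.mem_filter.mp hp).1).1)]
  refine Finset.sum_congr rfl fun a ha => ?_
  rw [← Finset.card_image_of_injective (t.filter fun b => P a b)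
    (Prod.mk_right_injective a)]
  congr 1
  ext ⟨x, y⟩
  simp only [Finset.mem_filter, Finset.mem_product, Finset.mem_image]
  constructor
  · rintro ⟨⟨⟨hx, hy⟩, hP⟩, rfl⟩
    exact ⟨y, ⟨hy, hP⟩, rfl⟩
  · rintro ⟨b, ⟨hb, hP⟩, h⟩
    obtain ⟨rfl, rfl⟩ := Prod.mk_inj.mp h
    exact ⟨⟨⟨ha, hb⟩, hP⟩, rfl⟩

private lemma card_filter_prod' (s t : Finset V) (P : V → V → Prop)
    [DecidablePred fun q : V × V => P q.1 q.2] [DecidablePred fun q : V × V => P q.2 q.1]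
    [∀ a, DecidablePred fun b => P a b] [∀ b, DecidablePred fun a => P a b] :
    ((s ×ˢ t).filter fun q => P q.1 q.2).card = ∑ b ∈ t, (s.filter fun a => P a b).card := by
  have := card_filter_prod t s (fun b a => P a b)
  rw [← this]
  apply Finset.card_nbij' (i := Prod.swap) (j := Prod.swap) <;>
    simp [Finset.mem_filter, Finset.mem_product, and_comm, Set.MapsTo, Set.LeftInvOn, Set.RightInvOn]

variable (G : SimpleGraph V) [DecidableRel G.Adj]

private lemma cnt_zero (A : Fin 0 → Finset V) : cnt G A = 1 := by
  rw [cnt, Finset.filter_true_of_mem (fun f _ => fun i => i.elim0), Fintype.card_piFinset]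
  simp

private lemma cnt_one (A : Fin 1 → Finset V) : cnt G A = (A 0).card := by
  rw [cnt, Finset.filter_true_of_mem, Fintype.card_piFinset]
  · simp
  · intro f _ i j hij
    have hi := i.2; have hj := j.2
    omega

private lemma cnt_decomp (n : ℕ) (A : Fin (n + 2) → Finset V) :
    cnt G A = ∑ p ∈ ((A ⟨n, by omega⟩ ×ˢ A ⟨n + 1, by omega⟩).filter fun p => G.Adj p.1 p.2),
      cnt G (fun i : Fin n =>
        (A ⟨i, by omega⟩).filter fun w => G.Adj w p.1 ∧ G.Adj w p.2) := by
  have hmap : ∀ f ∈ (Fintype.piFinset A).filter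
      fun f => ∀ i j : Fin (n + 2), i < j → G.Adj (f i) (f j),
      (f ⟨n, by omega⟩, f ⟨n + 1, by omega⟩) ∈
        (A ⟨n, by omega⟩ ×ˢ A ⟨n + 1, by omega⟩).filter fun p => G.Adj p.1 p.2 := by
    intro f hf
    obtain ⟨hfm, hfadj⟩ := Finset.mem_filter.mp hf
    rw [Fintype.mem_piFinset] at hfm
    exact Finset.mem_filter.mpr ⟨Finset.mem_product.mpr ⟨hfm ⟨n, by omega⟩, hfm ⟨n + 1, by omega⟩⟩,
      hfadj ⟨n, by omega⟩ ⟨n + 1, by omega⟩ (Fin.mk_lt_mk.mpr (by omega))⟩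
  rw [cnt, Finset.card_eq_sum_card_fiberwise hmap]
  refine Finset.sum_congr rfl fun p hp => ?_
  obtain ⟨hpm, hpadj⟩ := Finset.mem_filter.mp hp
  obtain ⟨hp1, hp2⟩ := Finset.mem_product.mp hpm
  rw [cnt]
  apply Finset.card_nbij'
    (i := fun (f : Fin (n + 2) → V) (i : Fin n) => f ⟨(i : ℕ), by omega⟩)
    (j := fun (g : Fin n → V) (j : Fin (n + 2)) =>
      if h : (j : ℕ) < n then g ⟨j, h⟩ else if (j : ℕ) = n then p.1 else p.2)
  · intro f hf
    rw [Finset.mem_coe, Finset.mem_filter, Finset.mem_filter, Fintype.mem_piFinset] at hf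
    obtain ⟨⟨hfmem, hfadj⟩, hfp⟩ := hf
    have hfa : f ⟨n, by omega⟩ = p.1 := congrArg Prod.fst hfp
    have hfb : f ⟨n + 1, by omega⟩ = p.2 := congrArg Prod.snd hfp
    refine Finset.mem_filter.mpr ⟨Fintype.mem_piFinset.mpr fun i => ?_, fun i j hij => ?_⟩
    · refine Finset.mem_filter.mpr ⟨hfmem _, ?_, ?_⟩
      · rw [← hfa]
        exact hfadj ⟨(i : ℕ), by omega⟩ ⟨n, by omega⟩
          (Fin.mk_lt_mk.mpr (by have := i.2; omega))
      · rw [← hfb]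
        exact hfadj ⟨(i : ℕ), by omega⟩ ⟨n + 1, by omega⟩
          (Fin.mk_lt_mk.mpr (by have := i.2; omega))
    · exact hfadj ⟨(i : ℕ), by omega⟩ ⟨(j : ℕ), by omega⟩ (Fin.mk_lt_mk.mpr (Fin.lt_def.mp hij))
  · intro g hg
    rw [Finset.mem_coe, Finset.mem_filter, Fintype.mem_piFinset] at hg
    obtain ⟨hgmem, hgadj⟩ := hg
    have hgm : ∀ i : Fin n, g i ∈ A ⟨(i : ℕ), by omega⟩ ∧ G.Adj (g i) p.1 ∧ G.Adj (g i) p.2 :=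
      fun i => Finset.mem_filter.mp (hgmem i)
    refine Finset.mem_filter.mpr ⟨Finset.mem_filter.mpr
      ⟨Fintype.mem_piFinset.mpr fun j => ?_, fun i j hij => ?_⟩, ?_⟩
    · beta_reduce
      by_cases h : (j : ℕ) < n
      · rw [dif_pos h]
        have := (hgm ⟨j, h⟩).1
        have he : (⟨((⟨(j : ℕ), h⟩ : Fin n) : ℕ), by omega⟩ : Fin (n + 2)) = j := Fin.ext rfl
        rwa [he] at this
      · rw [dif_neg h]
        by_cases h2 : (j : ℕ) = n
        · rw [if_pos h2, show j = (⟨n, by omega⟩ : Fin (n + 2)) from Fin.ext h2]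
          exact hp1
        · rw [if_neg h2, show j = (⟨n + 1, by omega⟩ : Fin (n + 2)) from
            Fin.ext (show (j : ℕ) = n + 1 from by have := j.2; omega)]
          exact hp2
    · beta_reduce
      have hijv : (i : ℕ) < (j : ℕ) := Fin.lt_def.mp hij
      by_cases hi : (i : ℕ) < n
      · rw [dif_pos hi]
        by_cases hj : (j : ℕ) < n
        · rw [dif_pos hj]
          exact hgadj ⟨i, hi⟩ ⟨j, hj⟩ (Fin.mk_lt_mk.mpr hijv)
        · rw [dif_neg hj]
          by_cases h2 : (j : ℕ) = n
          · rw [if_pos h2]; exact (hgm ⟨i, hi⟩).2.1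
          · rw [if_neg h2]; exact (hgm ⟨i, hi⟩).2.2
      · rw [dif_neg hi]
        have hj : ¬ (j : ℕ) < n := by omega
        have hi2 : (i : ℕ) = n := by have := i.2; have := j.2; omega
        have hj2 : ¬ (j : ℕ) = n := by omega
        rw [dif_neg hj, if_pos hi2, if_neg hj2]
        exact hpadj
    · have c1 : ¬ ((⟨n, by omega⟩ : Fin (n + 2)) : ℕ) < n := by simp
      have c2 : ((⟨n, by omega⟩ : Fin (n + 2)) : ℕ) = n := rfl
      have c3 : ¬ ((⟨n + 1, by omega⟩ : Fin (n + 2)) : ℕ) < n := by simp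
      have c4 : ¬ ((⟨n + 1, by omega⟩ : Fin (n + 2)) : ℕ) = n := by simp
      refine Prod.ext ?_ ?_
      · show (if h : _ then _ else _) = p.1
        rw [dif_neg c1, if_pos c2]
      · show (if h : _ then _ else _) = p.2
        rw [dif_neg c3, if_neg c4]
  · intro f hf
    rw [Finset.mem_coe, Finset.mem_filter] at hf
    have hfa : f ⟨n, by omega⟩ = p.1 := congrArg Prod.fst hf.2
    have hfb : f ⟨n + 1, by omega⟩ = p.2 := congrArg Prod.snd hf.2
    funext j
    beta_reduce
    by_cases h : (j : ℕ) < n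
    · rw [dif_pos h]
    · rw [dif_neg h]
      by_cases h2 : (j : ℕ) = n
      · rw [if_pos h2, ← hfa]
        congr 1
        exact Fin.ext h2.symm
      · rw [if_neg h2, ← hfb]
        congr 1
        exact Fin.ext (show n + 1 = (j : ℕ) from by have := j.2; omega)
  · intro g hg
    funext i
    beta_reduce
    have hi : ((⟨(i : ℕ), by omega⟩ : Fin (n + 2)) : ℕ) < n := i.2
    rw [dif_pos hi]

private lemma sum_d_eq (s t : Finset V) :
    ∑ u ∈ t, ((s.filter fun w => G.Adj w u).card : ℝ)
      = (((s ×ˢ t).filter fun q => G.Adj q.1 q.2).card : ℝ) := by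
  rw [card_filter_prod' s t (fun a b => G.Adj a b)]
  push_cast
  rfl

private lemma cnt_three (A : Fin (1 + 2) → Finset V) (ℓ : ℝ) (hℓ : 0 ≤ ℓ)
    (hedges : ∀ i j : Fin (1 + 2), i < j →
      (((A i ×ˢ A j).filter fun q => G.Adj q.1 q.2).card : ℝ) ≤ ℓ) :
    (cnt G A : ℝ) ≤ ℓ ^ ((3 : ℝ) / 2) := by
  have hdec := cnt_decomp G 1 A
  set E := ((A ⟨1, by omega⟩ ×ˢ A ⟨2, by omega⟩).filter fun p => G.Adj p.1 p.2) with hE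
  -- d u := number of neighbors of u inside A 0
  set d : V → ℝ := fun u => (((A 0).filter fun w => G.Adj w u).card : ℝ) with hd
  have hd0 : ∀ u, 0 ≤ d u := fun u => by positivity
  -- each term is at most √(d p.1 * d p.2)
  have hterm : ∀ p ∈ E, ((cnt G fun i : Fin 1 =>
      (A ⟨(i : ℕ), by omega⟩).filter fun w => G.Adj w p.1 ∧ G.Adj w p.2) : ℝ)
      ≤ Real.sqrt (d p.1 * d p.2) := by
    intro p _
    rw [cnt_one]
    have h0 : (⟨((0 : Fin 1) : ℕ), by omega⟩ : Fin 3) = 0 := rfl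
    rw [h0]
    set c := ((A 0).filter fun w => G.Adj w p.1 ∧ G.Adj w p.2).card with hc
    have hc1 : (c : ℝ) ≤ d p.1 := by
      simp only [hd]
      have : c ≤ ((A 0).filter fun w => G.Adj w p.1).card := by
        apply Finset.card_le_card
        intro x hx; simp only [Finset.mem_filter] at hx ⊢; exact ⟨hx.1, hx.2.1⟩
      exact_mod_cast this
    have hc2 : (c : ℝ) ≤ d p.2 := by
      simp only [hd]
      have : c ≤ ((A 0).filter fun w => G.Adj w p.2).card := by
        apply Finset.card_le_card
        intro x hx; simp only [Finset.mem_filter] at hx ⊢; exact ⟨hx.1, hx.2.2⟩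
      exact_mod_cast this
    rw [Real.le_sqrt (by positivity) (by positivity)]
    calc (c : ℝ) ^ 2 = (c : ℝ) * (c : ℝ) := by ring
      _ ≤ d p.1 * d p.2 := mul_le_mul hc1 hc2 (by positivity) (hd0 _)
  -- Cauchy–Schwarz
  have hCS : (∑ p ∈ E, Real.sqrt (d p.1 * d p.2)) ^ 2
      ≤ (E.card : ℝ) * ∑ p ∈ E, d p.1 * d p.2 := by
    have := Finset.sum_mul_sq_le_sq_mul_sq E (fun _ => (1 : ℝ))
      (fun p => Real.sqrt (d p.1 * d p.2))
    simpa [Real.sq_sqrt, mul_nonneg (hd0 _) (hd0 _)] using this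
  have hsum_dd : ∑ p ∈ E, d p.1 * d p.2 ≤ ℓ * ℓ := by
    calc ∑ p ∈ E, d p.1 * d p.2
        ≤ ∑ p ∈ (A ⟨1, by omega⟩ ×ˢ A ⟨2, by omega⟩), d p.1 * d p.2 :=
          Finset.sum_le_sum_of_subset_of_nonneg (Finset.filter_subset _ _)
            (fun p _ _ => mul_nonneg (hd0 _) (hd0 _))
      _ = (∑ u ∈ A ⟨1, by omega⟩, d u) * (∑ v ∈ A ⟨2, by omega⟩, d v) := by
          rw [Finset.sum_product, ← Finset.sum_mul_sum]
      _ ≤ ℓ * ℓ := by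
          have h1 : (∑ u ∈ A ⟨1, by omega⟩, d u) ≤ ℓ := by
            rw [hd]; rw [sum_d_eq]
            exact hedges 0 ⟨1, by omega⟩ (by simp [Fin.lt_def])
          have h2 : (∑ v ∈ A ⟨2, by omega⟩, d v) ≤ ℓ := by
            rw [hd]; rw [sum_d_eq]
            exact hedges 0 ⟨2, by omega⟩ (by simp [Fin.lt_def])
          have hs1 : 0 ≤ ∑ u ∈ A ⟨1, by omega⟩, d u := Finset.sum_nonneg fun u _ => hd0 u
          exact mul_le_mul h1 h2 (Finset.sum_nonneg fun v _ => hd0 v) hℓ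
  have hEcard : (E.card : ℝ) ≤ ℓ := hedges ⟨1, by omega⟩ ⟨2, by omega⟩ (by simp [Fin.lt_def])
  have hsq : (∑ p ∈ E, Real.sqrt (d p.1 * d p.2)) ^ 2 ≤ ℓ ^ 3 := by
    calc (∑ p ∈ E, Real.sqrt (d p.1 * d p.2)) ^ 2
        ≤ (E.card : ℝ) * ∑ p ∈ E, d p.1 * d p.2 := hCS
      _ ≤ ℓ * (ℓ * ℓ) := by
          apply mul_le_mul hEcard hsum_dd
            (Finset.sum_nonneg fun p _ => mul_nonneg (hd0 _) (hd0 _)) hℓ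
      _ = ℓ ^ 3 := by ring
  have hfin : (cnt G A : ℝ) ≤ ∑ p ∈ E, Real.sqrt (d p.1 * d p.2) := by
    rw [hdec]
    push_cast
    exact Finset.sum_le_sum hterm
  have hsqrt : (∑ p ∈ E, Real.sqrt (d p.1 * d p.2)) ≤ Real.sqrt (ℓ ^ 3) :=
    Real.le_sqrt_of_sq_le hsq
  calc (cnt G A : ℝ) ≤ ∑ p ∈ E, Real.sqrt (d p.1 * d p.2) := hfin
    _ ≤ Real.sqrt (ℓ ^ 3) := hsqrt
    _ = ℓ ^ ((3 : ℝ) / 2) := by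
        rw [Real.sqrt_eq_rpow, ← Real.rpow_natCast ℓ 3, ← Real.rpow_mul hℓ]
        norm_num

private lemma cnt_le (ℓ : ℝ) (hℓ : 0 ≤ ℓ) :
    ∀ r : ℕ, r ≠ 1 → ∀ A : Fin r → Finset V,
      (∀ i j : Fin r, i < j →
        (((A i ×ˢ A j).filter fun q => G.Adj q.1 q.2).card : ℝ) ≤ ℓ) →
      (cnt G A : ℝ) ≤ ℓ ^ ((r : ℝ) / 2) := by
  intro r
  induction r using Nat.strong_induction_on with
  | _ r ih =>
    match r with
    | 0 =>
      intro _ A _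
      rw [cnt_zero]
      norm_num
    | 1 => intro h; exact absurd rfl h
    | (n + 2) =>
      intro _ A hedges
      by_cases hn1 : n = 1
      · subst hn1
        exact cnt_three G A ℓ hℓ hedges
      rw [cnt_decomp]
      set E := ((A ⟨n, by omega⟩ ×ˢ A ⟨n + 1, by omega⟩).filter fun p => G.Adj p.1 p.2) with hE
      have hterm : ∀ p ∈ E, ((cnt G fun i : Fin n =>
          (A ⟨(i : ℕ), by omega⟩).filter fun w => G.Adj w p.1 ∧ G.Adj w p.2) : ℝ)
          ≤ ℓ ^ ((n : ℝ) / 2) := by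
        intro p _
        apply ih n (by omega) hn1
        intro i j hij
        refine le_trans ?_ (hedges ⟨(i : ℕ), by omega⟩ ⟨(j : ℕ), by omega⟩
          (Fin.mk_lt_mk.mpr (Fin.lt_def.mp hij)))
        have : (((A ⟨(i:ℕ), by omega⟩).filter fun w => G.Adj w p.1 ∧ G.Adj w p.2) ×ˢ
            ((A ⟨(j:ℕ), by omega⟩).filter fun w => G.Adj w p.1 ∧ G.Adj w p.2)).filter
            (fun q => G.Adj q.1 q.2) ⊆
            (A ⟨(i:ℕ), by omega⟩ ×ˢ A ⟨(j:ℕ), by omega⟩).filter (fun q => G.Adj q.1 q.2) := by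
          apply Finset.filter_subset_filter
          exact Finset.product_subset_product (Finset.filter_subset _ _) (Finset.filter_subset _ _)
        exact_mod_cast Finset.card_le_card this
      have hEcard : (E.card : ℝ) ≤ ℓ :=
        hedges ⟨n, by omega⟩ ⟨n + 1, by omega⟩ (by simp [Fin.lt_def])
      calc ((∑ p ∈ E, cnt G fun i : Fin n =>
              (A ⟨(i : ℕ), by omega⟩).filter fun w => G.Adj w p.1 ∧ G.Adj w p.2 : ℕ) : ℝ)
          = ∑ p ∈ E, ((cnt G fun i : Fin n =>
              (A ⟨(i : ℕ), by omega⟩).filter fun w => G.Adj w p.1 ∧ G.Adj w p.2 : ℕ) : ℝ) := by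
            push_cast; rfl
        _ ≤ ∑ p ∈ E, ℓ ^ ((n : ℝ) / 2) := Finset.sum_le_sum hterm
        _ = (E.card : ℝ) * ℓ ^ ((n : ℝ) / 2) := by rw [Finset.sum_const, nsmul_eq_mul]
        _ ≤ ℓ * ℓ ^ ((n : ℝ) / 2) :=
            mul_le_mul_of_nonneg_right hEcard (Real.rpow_nonneg hℓ _)
        _ ≤ ℓ ^ (((n : ℝ) + 2) / 2) := by
            rcases eq_or_lt_of_le hℓ with h0 | h0
            · rw [← h0]
              have : ((0:ℝ)) * (0:ℝ) ^ ((n:ℝ)/2) = 0 := by ring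
              rw [this]
              exact Real.rpow_nonneg le_rfl _
            · rw [show ((n : ℝ) + 2) / 2 = 1 + (n : ℝ) / 2 by ring,
                Real.rpow_add h0, Real.rpow_one]
        _ = ℓ ^ (((n + 2 : ℕ) : ℝ) / 2) := by push_cast; ring_nf

end AlonAux

/-- a theorem of Alon, as used in Section 7 of DeMarco–Kahn.
An `r`-partite graph with at most `ℓ` edges between any two of its parts contains at
most `ℓ^{r/2}` copies of `K_r`. -/
theorem clique_count_of_partite_bound {V : Type*} [Fintype V] [DecidableEq V]
    (G : SimpleGraph V) [DecidableRel G.Adj] (r : ℕ) (hr : 2 ≤ r) (ℓ : ℝ) (hℓ : 0 ≤ ℓ)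
    (U : Fin r → Finset V)
    (hdisj : ∀ i j : Fin r, i ≠ j → Disjoint (U i) (U j))
    (hcover : ∀ v : V, ∃ i : Fin r, v ∈ U i)
    (hindep : ∀ i : Fin r, ∀ x ∈ U i, ∀ y ∈ U i, ¬ G.Adj x y)
    (hedges : ∀ i j : Fin r, i < j →
      (((U i ×ˢ U j).filter fun q => G.Adj q.1 q.2).card : ℝ) ≤ ℓ) :
    ((G.cliqueFinset r).card : ℝ) ≤ ℓ ^ ((r : ℝ) / 2) := by
  have key : (G.cliqueFinset r).card ≤ cnt G U := by
    rw [cnt]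
    apply Finset.card_le_card_of_surjOn (fun f => Finset.image f Finset.univ)
    intro s hs
    rw [Set.mem_image]
    have hs' : G.IsNClique r s :=
      SimpleGraph.mem_cliqueFinset_iff.mp (Finset.mem_coe.mp hs)
    set pt : V → Fin r := fun v => (hcover v).choose with hptdef
    have hpt : ∀ v : V, v ∈ U (pt v) := fun v => (hcover v).choose_spec
    let e : {x // x ∈ s} → Fin r := fun x => pt x.1
    have einj : Function.Injective e := by
      intro x y hxy
      by_contra hne
      have hxyne : x.1 ≠ y.1 := fun h => hne (Subtype.ext h)
      have hadj : G.Adj x.1 y.1 := hs'.1 x.2 y.2 hxyne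
      have hyU : y.1 ∈ U (pt x.1) := by
        have : pt y.1 = pt x.1 := hxy.symm
        rw [← this]; exact hpt y.1
      exact hindep (pt x.1) x.1 (hpt x.1) y.1 hyU hadj
    have hcard : Fintype.card {x // x ∈ s} = Fintype.card (Fin r) := by
      rw [Fintype.card_coe, hs'.2, Fintype.card_fin]
    have ebij : Function.Bijective e :=
      (Fintype.bijective_iff_injective_and_card e).mpr ⟨einj, hcard⟩
    set q := Equiv.ofBijective e ebij with hq
    set f : Fin r → V := fun i => (q.symm i).1 with hfdef
    have hfU : ∀ i, f i ∈ U i := by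
      intro i
      have h2 : pt (f i) = i := q.apply_symm_apply i
      have h3 := hpt (f i)
      rwa [h2] at h3
    have hfs : ∀ i, f i ∈ s := fun i => (q.symm i).2
    have hfne : ∀ i j : Fin r, i ≠ j → f i ≠ f j := by
      intro i j hij h
      exact hij (q.symm.injective (Subtype.ext h))
    refine ⟨f, ?_, ?_⟩
    · simp only [Finset.mem_coe, Finset.mem_filter, Fintype.mem_piFinset]
      exact ⟨hfU, fun i j hij => hs'.1 (hfs i) (hfs j) (hfne i j (ne_of_lt hij))⟩
    · apply Finset.Subset.antisymm
      · intro v hv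
        obtain ⟨i, _, rfl⟩ := Finset.mem_image.mp hv
        exact hfs i
      · intro v hv
        refine Finset.mem_image.mpr ⟨e ⟨v, hv⟩, Finset.mem_univ _, ?_⟩
        show (q.symm (q ⟨v, hv⟩)).1 = v
        rw [q.symm_apply_apply]
  calc ((G.cliqueFinset r).card : ℝ) ≤ (cnt G U : ℝ) := by exact_mod_cast key
    _ ≤ ℓ ^ ((r : ℝ) / 2) := cnt_le G ℓ hℓ r (by omega) U hedges
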